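/- Let K be an algebraically closed field and let s, r ∈ K with s ≠ 0, r ≠ 0, s² ≠ 1, r² ≠ 1; set t = diag(s, s⁻¹), t' = diag(r, r⁻¹), Δ = s − s⁻¹. Then the set {(X, Y) : X is SL₂(K)-conjugate to t, Y is SL₂(K)-conjugate to t', and trace(X·Y) = s⁻¹·r + s·r⁻¹} is the union of the SL₂(K)-orbits of the three pairs ([[s⁻¹, Δ],[0, s]], t'), ([[s⁻¹, 0],[Δ, s]], t') and (diag(s⁻¹, s), t'), and these three orbits are pairwise disjoint. -/

import Mathlib

open Matrix

/-- `diag(s, s⁻¹) ∈ SL₂(K)` for `s ≠ 0`. -/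
def diagSL {K : Type*} [Field K] (s : K) (hs : s ≠ 0) : SpecialLinearGroup (Fin 2) K :=
  ⟨!![s, 0; 0, s⁻¹], by rw [Matrix.det_fin_two_of]; field_simp; ring⟩

/-- `diag(s⁻¹, s) ∈ SL₂(K)` for `s ≠ 0`. -/
def diagSL' {K : Type*} [Field K] (s : K) (hs : s ≠ 0) : SpecialLinearGroup (Fin 2) K :=
  ⟨!![s⁻¹, 0; 0, s], by rw [Matrix.det_fin_two_of]; field_simp; ring⟩

/-- `[[s⁻¹, Δ],[0, s]] ∈ SL₂(K)` where `Δ = s - s⁻¹`. -/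
def upSL' {K : Type*} [Field K] (s : K) (hs : s ≠ 0) : SpecialLinearGroup (Fin 2) K :=
  ⟨!![s⁻¹, s - s⁻¹; 0, s], by rw [Matrix.det_fin_two_of]; field_simp; ring⟩

/-- `[[s⁻¹, 0],[Δ, s]] ∈ SL₂(K)` where `Δ = s - s⁻¹`. -/
def lowSL' {K : Type*} [Field K] (s : K) (hs : s ≠ 0) : SpecialLinearGroup (Fin 2) K :=
  ⟨!![s⁻¹, 0; s - s⁻¹, s], by rw [Matrix.det_fin_two_of]; field_simp; ring⟩

/-- The `SL₂(K)`-orbit of the pair `(P, Q)` under simultaneous conjugation. -/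
def pairOrbit {K : Type*} [Field K] (P Q : SpecialLinearGroup (Fin 2) K) :
    Set (SpecialLinearGroup (Fin 2) K × SpecialLinearGroup (Fin 2) K) :=
  {pq | ∃ A : SpecialLinearGroup (Fin 2) K, pq = (A * P * A⁻¹, A * Q * A⁻¹)}

section Aux

variable {K : Type*} [Field K]

local notation "SL2" => SpecialLinearGroup (Fin 2) K

lemma conj_iff_aux (A B C : SL2) : A = B * C * B⁻¹ ↔ A * B = B * C := by
  constructor
  · intro h; rw [h]; group
  · intro h
    have : A * B * B⁻¹ = B * C * B⁻¹ := by rw [h]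
    simpa [mul_assoc] using this

lemma trace_conj_aux (A M : SL2) :
    Matrix.trace ((A * M * A⁻¹ : SL2) : Matrix (Fin 2) (Fin 2) K)
      = Matrix.trace (M : Matrix (Fin 2) (Fin 2) K) := by
  rw [Matrix.SpecialLinearGroup.coe_mul, Matrix.SpecialLinearGroup.coe_mul, trace_mul_comm,
    ← mul_assoc, ← Matrix.SpecialLinearGroup.coe_mul, inv_mul_cancel,
    Matrix.SpecialLinearGroup.coe_one, one_mul]

lemma sub_inv_ne_zero_aux {s : K} (hs : s ≠ 0) (h2 : s ^ 2 ≠ 1) : s - s⁻¹ ≠ 0 := by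
  intro h
  apply h2
  have hss : s = s⁻¹ := sub_eq_zero.mp h
  calc s ^ 2 = s * s := sq s
  _ = s * s⁻¹ := by rw [← hss]
  _ = 1 := mul_inv_cancel₀ hs

lemma diag_comm_aux {l r : K} (hl : l ≠ 0) (hr : r ≠ 0) :
    diagSL l hl * diagSL r hr = diagSL r hr * diagSL l hl := by
  apply Subtype.ext
  show ((diagSL l hl : Matrix (Fin 2) (Fin 2) K)) * (diagSL r hr) = (diagSL r hr : Matrix (Fin 2) (Fin 2) K) * (diagSL l hl)
  simp [diagSL, Matrix.mul_fin_two, mul_comm]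

lemma up_conj_aux (s : K) (hs : s ≠ 0) :
    ∃ C : SL2, upSL' s hs = C * diagSL s hs * C⁻¹ := by
  refine ⟨⟨!![1, -1; 1, 0], by simp [Matrix.det_fin_two_of]⟩, ?_⟩
  apply (conj_iff_aux _ _ _).mpr
  apply Subtype.ext
  show (upSL' s hs : Matrix (Fin 2) (Fin 2) K) * !![1, -1; 1, 0]
      = !![1, -1; 1, 0] * (diagSL s hs : Matrix (Fin 2) (Fin 2) K)
  simp [upSL', diagSL, Matrix.mul_fin_two]

lemma low_conj_aux (s : K) (hs : s ≠ 0) :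
    ∃ C : SL2, lowSL' s hs = C * diagSL s hs * C⁻¹ := by
  refine ⟨⟨!![0, -1; 1, 1], by simp [Matrix.det_fin_two_of]⟩, ?_⟩
  apply (conj_iff_aux _ _ _).mpr
  apply Subtype.ext
  show (lowSL' s hs : Matrix (Fin 2) (Fin 2) K) * !![0, -1; 1, 1]
      = !![0, -1; 1, 1] * (diagSL s hs : Matrix (Fin 2) (Fin 2) K)
  simp [lowSL', diagSL, Matrix.mul_fin_two]

lemma diag'_conj_aux (s : K) (hs : s ≠ 0) :
    ∃ C : SL2, diagSL' s hs = C * diagSL s hs * C⁻¹ := by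
  refine ⟨⟨!![0, -1; 1, 0], by simp [Matrix.det_fin_two_of]⟩, ?_⟩
  apply (conj_iff_aux _ _ _).mpr
  apply Subtype.ext
  show (diagSL' s hs : Matrix (Fin 2) (Fin 2) K) * !![0, -1; 1, 0]
      = !![0, -1; 1, 0] * (diagSL s hs : Matrix (Fin 2) (Fin 2) K)
  simp [diagSL', diagSL, Matrix.mul_fin_two]

lemma orbit_subset_fiber_aux (s r : K) (hs : s ≠ 0) (hr : r ≠ 0) (P : SL2)
    (hP : ∃ C : SL2, P = C * diagSL s hs * C⁻¹)
    (htr : Matrix.trace ((P : Matrix (Fin 2) (Fin 2) K) * (diagSL r hr : Matrix (Fin 2) (Fin 2) K))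
      = s⁻¹ * r + s * r⁻¹) :
    pairOrbit P (diagSL r hr) ⊆
      {pq : SL2 × SL2 |
        (∃ A : SL2, pq.1 = A * diagSL s hs * A⁻¹) ∧
        (∃ A : SL2, pq.2 = A * diagSL r hr * A⁻¹) ∧
        Matrix.trace ((pq.1 : Matrix (Fin 2) (Fin 2) K) * (pq.2 : Matrix (Fin 2) (Fin 2) K)) =
          s⁻¹ * r + s * r⁻¹} := by
  rintro pq ⟨A, rfl⟩
  obtain ⟨C, hC⟩ := hP
  refine ⟨⟨A * C, ?_⟩, ⟨A, rfl⟩, ?_⟩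
  · show A * P * A⁻¹ = A * C * diagSL s hs * (A * C)⁻¹
    rw [hC]; group
  · show Matrix.trace (((A * P * A⁻¹ : SL2) : Matrix (Fin 2) (Fin 2) K)
      * ((A * diagSL r hr * A⁻¹ : SL2) : Matrix (Fin 2) (Fin 2) K)) = _
    rw [← Matrix.SpecialLinearGroup.coe_mul]
    have hgrp : (A * P * A⁻¹) * (A * diagSL r hr * A⁻¹) = A * (P * diagSL r hr) * A⁻¹ := by
      group
    rw [hgrp, trace_conj_aux, Matrix.SpecialLinearGroup.coe_mul, htr]

lemma stab_diag_aux (r : K) (hr : r ≠ 0) (hr2 : r ^ 2 ≠ 1) (E : SL2)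
    (h : E * diagSL r hr = diagSL r hr * E) :
    (E : Matrix (Fin 2) (Fin 2) K) 0 1 = 0 ∧ (E : Matrix (Fin 2) (Fin 2) K) 1 0 = 0 := by
  have hm : (E : Matrix (Fin 2) (Fin 2) K) * (diagSL r hr : Matrix (Fin 2) (Fin 2) K)
      = (diagSL r hr : Matrix (Fin 2) (Fin 2) K) * E := by
    rw [← Matrix.SpecialLinearGroup.coe_mul, ← Matrix.SpecialLinearGroup.coe_mul, h]
  have hrr : r - r⁻¹ ≠ 0 := sub_inv_ne_zero_aux hr hr2
  have h01 := congrFun (congrFun hm 0) 1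
  have h10 := congrFun (congrFun hm 1) 0
  simp [diagSL, Matrix.mul_apply, Fin.sum_univ_two] at h01 h10
  constructor
  · have : (E : Matrix (Fin 2) (Fin 2) K) 0 1 * (r⁻¹ - r) = 0 := by
      linear_combination h01
    rcases mul_eq_zero.mp this with h | h
    · exact h
    · exact absurd (by linear_combination -h) hrr
  · have : (E : Matrix (Fin 2) (Fin 2) K) 1 0 * (r - r⁻¹) = 0 := by
      linear_combination h10
    rcases mul_eq_zero.mp this with h | h
    · exact h
    · exact absurd h hrr

lemma disjoint_orbits_aux (r : K) (hr : r ≠ 0) (hr2 : r ^ 2 ≠ 1) (P Q : SL2)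
    (hPQ : ∀ E : SL2, (E : Matrix (Fin 2) (Fin 2) K) 0 1 = 0 →
      (E : Matrix (Fin 2) (Fin 2) K) 1 0 = 0 → E * P ≠ Q * E) :
    Disjoint (pairOrbit P (diagSL r hr)) (pairOrbit Q (diagSL r hr)) := by
  rw [Set.disjoint_left]
  rintro pq ⟨A, rfl⟩ ⟨B, hB⟩
  rw [Prod.mk.injEq] at hB
  obtain ⟨h1, h2⟩ := hB
  set E : SL2 := B⁻¹ * A with hE
  have hEt : E * diagSL r hr = diagSL r hr * E := by
    calc E * diagSL r hr = B⁻¹ * (A * diagSL r hr * A⁻¹) * A := by rw [hE]; group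
    _ = B⁻¹ * (B * diagSL r hr * B⁻¹) * A := by rw [← h2]
    _ = diagSL r hr * E := by rw [hE]; group
  have hEP : E * P = Q * E := by
    calc E * P = B⁻¹ * (A * P * A⁻¹) * A := by rw [hE]; group
    _ = B⁻¹ * (B * Q * B⁻¹) * A := by rw [← h1]
    _ = Q * E := by rw [hE]; group
  obtain ⟨h01, h10⟩ := stab_diag_aux r hr hr2 E hEt
  exact hPQ E h01 h10 hEP

lemma fiber_subset_aux [IsAlgClosed K] (s r : K) (hs : s ≠ 0) (hr : r ≠ 0)
    (hs2 : s ^ 2 ≠ 1) (hr2 : r ^ 2 ≠ 1) :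
    {pq : SL2 × SL2 |
        (∃ A : SL2, pq.1 = A * diagSL s hs * A⁻¹) ∧
        (∃ A : SL2, pq.2 = A * diagSL r hr * A⁻¹) ∧
        Matrix.trace ((pq.1 : Matrix (Fin 2) (Fin 2) K) * (pq.2 : Matrix (Fin 2) (Fin 2) K)) =
          s⁻¹ * r + s * r⁻¹} ⊆
      pairOrbit (upSL' s hs) (diagSL r hr) ∪ pairOrbit (lowSL' s hs) (diagSL r hr) ∪
        pairOrbit (diagSL' s hs) (diagSL r hr) := by
  rintro pq ⟨⟨C, hC⟩, ⟨B, hB⟩, htr⟩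
  have hΔ : s - s⁻¹ ≠ 0 := sub_inv_ne_zero_aux hs hs2
  have hrr : r - r⁻¹ ≠ 0 := sub_inv_ne_zero_aux hr hr2
  set Z : SL2 := B⁻¹ * pq.1 * B with hZ
  have hpq1 : pq.1 = B * Z * B⁻¹ := by rw [hZ]; group
  have hZconj : Z = (B⁻¹ * C) * diagSL s hs * (B⁻¹ * C)⁻¹ := by
    rw [hZ, hC]; group
  have htrZ : Matrix.trace (Z : Matrix (Fin 2) (Fin 2) K) = s + s⁻¹ := by
    rw [hZconj, trace_conj_aux]
    simp [diagSL, Matrix.trace_fin_two]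
  have hdet : Matrix.det (Z : Matrix (Fin 2) (Fin 2) K) = 1 := Z.2
  have hprod : pq.1 * pq.2 = B * (Z * diagSL r hr) * B⁻¹ := by
    rw [hpq1, hB]; group
  have htrZt : Matrix.trace ((Z : Matrix (Fin 2) (Fin 2) K)
      * (diagSL r hr : Matrix (Fin 2) (Fin 2) K)) = s⁻¹ * r + s * r⁻¹ := by
    rw [← Matrix.SpecialLinearGroup.coe_mul]
    rw [← Matrix.SpecialLinearGroup.coe_mul, hprod, trace_conj_aux] at htr
    exact htr
  have h1 : (Z : Matrix (Fin 2) (Fin 2) K) 0 0 + (Z : Matrix (Fin 2) (Fin 2) K) 1 1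
      = s + s⁻¹ := by
    rw [← Matrix.trace_fin_two]; exact htrZ
  have h2 : (Z : Matrix (Fin 2) (Fin 2) K) 0 0 * r + (Z : Matrix (Fin 2) (Fin 2) K) 1 1 * r⁻¹
      = s⁻¹ * r + s * r⁻¹ := by
    rw [Matrix.trace_fin_two] at htrZt
    simp [diagSL, Matrix.mul_apply, Fin.sum_univ_two] at htrZt
    linear_combination htrZt
  have ha : (Z : Matrix (Fin 2) (Fin 2) K) 0 0 = s⁻¹ := by
    have key : (Z : Matrix (Fin 2) (Fin 2) K) 0 0 * (r - r⁻¹) = s⁻¹ * (r - r⁻¹) := by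
      linear_combination h2 - r⁻¹ * h1
    exact mul_right_cancel₀ hrr key
  have hd : (Z : Matrix (Fin 2) (Fin 2) K) 1 1 = s := by linear_combination h1 - ha
  have hbc : (Z : Matrix (Fin 2) (Fin 2) K) 0 1 * (Z : Matrix (Fin 2) (Fin 2) K) 1 0 = 0 := by
    rw [Matrix.det_fin_two, ha, hd] at hdet
    have h3 : s⁻¹ * s = 1 := inv_mul_cancel₀ hs
    linear_combination h3 - hdet
  by_cases hb : (Z : Matrix (Fin 2) (Fin 2) K) 0 1 = 0
  · by_cases hc : (Z : Matrix (Fin 2) (Fin 2) K) 1 0 = 0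
    · -- diagonal case
      right
      have hZeq : Z = diagSL' s hs := by
        apply Subtype.ext
        show (Z : Matrix (Fin 2) (Fin 2) K) = _
        rw [Matrix.eta_fin_two (Z : Matrix (Fin 2) (Fin 2) K), ha, hb, hc, hd]
        rfl
      exact ⟨B, Prod.ext (by rw [hpq1, hZeq]) hB⟩
    · -- lower triangular case
      left; right
      obtain ⟨l, hl⟩ := IsAlgClosed.exists_pow_nat_eq
        ((s - s⁻¹) * ((Z : Matrix (Fin 2) (Fin 2) K) 1 0)⁻¹) (n := 2) (by norm_num)
      have hl0 : l ≠ 0 := by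
        intro h
        rw [h] at hl
        simp only [ne_eq, OfNat.ofNat_ne_zero, not_false_eq_true, zero_pow] at hl
        rcases mul_eq_zero.mp hl.symm with h' | h'
        · exact hΔ h'
        · exact inv_ne_zero hc h'
      have hc2 : s - s⁻¹ = (Z : Matrix (Fin 2) (Fin 2) K) 1 0 * l ^ 2 := by
        rw [hl]; field_simp
      set D := diagSL l hl0 with hD
      have hZD : Z = D * lowSL' s hs * D⁻¹ := by
        rw [conj_iff_aux]
        apply Subtype.ext
        show (Z : Matrix (Fin 2) (Fin 2) K) * (D : Matrix (Fin 2) (Fin 2) K)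
          = (D : Matrix (Fin 2) (Fin 2) K) * (lowSL' s hs : Matrix (Fin 2) (Fin 2) K)
        rw [Matrix.eta_fin_two (Z : Matrix (Fin 2) (Fin 2) K), ha, hb, hd]
        show _ * !![l, 0; 0, l⁻¹] = !![l, 0; 0, l⁻¹] * !![s⁻¹, 0; s - s⁻¹, s]
        rw [hc2]
        ext i j
        fin_cases i <;> fin_cases j <;>
          simp [Matrix.mul_apply, Fin.sum_univ_two] <;> field_simp <;> ring
      have ht'D : diagSL r hr = D * diagSL r hr * D⁻¹ :=
        (conj_iff_aux _ _ _).mpr (diag_comm_aux hr hl0)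
      refine ⟨B * D, Prod.ext ?_ ?_⟩
      · show pq.1 = B * D * lowSL' s hs * (B * D)⁻¹
        rw [hpq1, hZD]; group
      · show pq.2 = B * D * diagSL r hr * (B * D)⁻¹
        have hstep : B * D * diagSL r hr * (B * D)⁻¹
            = B * (D * diagSL r hr * D⁻¹) * B⁻¹ := by group
        rw [hstep, ← ht'D, hB]
  · -- upper triangular case
    left; left
    have hc : (Z : Matrix (Fin 2) (Fin 2) K) 1 0 = 0 := by
      rcases mul_eq_zero.mp hbc with h | h
      · exact absurd h hb
      · exact h
    obtain ⟨l, hl⟩ := IsAlgClosed.exists_pow_nat_eq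
      ((Z : Matrix (Fin 2) (Fin 2) K) 0 1 * (s - s⁻¹)⁻¹) (n := 2) (by norm_num)
    have hl0 : l ≠ 0 := by
      intro h
      rw [h] at hl
      simp only [ne_eq, OfNat.ofNat_ne_zero, not_false_eq_true, zero_pow] at hl
      rcases mul_eq_zero.mp hl.symm with h' | h'
      · exact hb h'
      · exact inv_ne_zero hΔ h'
    have hb2 : (Z : Matrix (Fin 2) (Fin 2) K) 0 1 = l ^ 2 * (s - s⁻¹) := by
      rw [hl]
      exact (inv_mul_cancel_right₀ hΔ _).symm
    set D := diagSL l hl0 with hD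
    have hZD : Z = D * upSL' s hs * D⁻¹ := by
      rw [conj_iff_aux]
      apply Subtype.ext
      show (Z : Matrix (Fin 2) (Fin 2) K) * (D : Matrix (Fin 2) (Fin 2) K)
        = (D : Matrix (Fin 2) (Fin 2) K) * (upSL' s hs : Matrix (Fin 2) (Fin 2) K)
      rw [Matrix.eta_fin_two (Z : Matrix (Fin 2) (Fin 2) K), ha, hb2, hc, hd]
      show _ * !![l, 0; 0, l⁻¹] = !![l, 0; 0, l⁻¹] * !![s⁻¹, s - s⁻¹; 0, s]
      ext i j
      fin_cases i <;> fin_cases j <;>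
        simp [Matrix.mul_apply, Fin.sum_univ_two] <;> field_simp <;> ring
    have ht'D : diagSL r hr = D * diagSL r hr * D⁻¹ :=
      (conj_iff_aux _ _ _).mpr (diag_comm_aux hr hl0)
    refine ⟨B * D, Prod.ext ?_ ?_⟩
    · show pq.1 = B * D * upSL' s hs * (B * D)⁻¹
      rw [hpq1, hZD]; group
    · show pq.2 = B * D * diagSL r hr * (B * D)⁻¹
      have hstep : B * D * diagSL r hr * (B * D)⁻¹
          = B * (D * diagSL r hr * D⁻¹) * B⁻¹ := by group
      rw [hstep, ← ht'D, hB]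

end Aux

/-- The fiber `tr(XY) = s⁻¹r + sr⁻¹` is the union of the three pairwise disjoint orbits
of `([[s⁻¹,Δ],[0,s]], t')`, `([[s⁻¹,0],[Δ,s]], t')`, `(diag(s⁻¹,s), t')`. -/
theorem fiber_lneg1_decomposition {K : Type*} [Field K] [IsAlgClosed K]
    (s r : K) (hs : s ≠ 0) (hr : r ≠ 0) (hs2 : s ^ 2 ≠ 1) (hr2 : r ^ 2 ≠ 1) :
    ({pq : SpecialLinearGroup (Fin 2) K × SpecialLinearGroup (Fin 2) K |
        (∃ A : SpecialLinearGroup (Fin 2) K, pq.1 = A * diagSL s hs * A⁻¹) ∧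
        (∃ A : SpecialLinearGroup (Fin 2) K, pq.2 = A * diagSL r hr * A⁻¹) ∧
        Matrix.trace ((pq.1 : Matrix (Fin 2) (Fin 2) K) * (pq.2 : Matrix (Fin 2) (Fin 2) K)) =
          s⁻¹ * r + s * r⁻¹} =
      pairOrbit (upSL' s hs) (diagSL r hr) ∪ pairOrbit (lowSL' s hs) (diagSL r hr) ∪
        pairOrbit (diagSL' s hs) (diagSL r hr)) ∧
    Disjoint (pairOrbit (upSL' s hs) (diagSL r hr)) (pairOrbit (lowSL' s hs) (diagSL r hr)) ∧
    Disjoint (pairOrbit (upSL' s hs) (diagSL r hr)) (pairOrbit (diagSL' s hs) (diagSL r hr)) ∧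
    Disjoint (pairOrbit (lowSL' s hs) (diagSL r hr)) (pairOrbit (diagSL' s hs) (diagSL r hr)) := by
  have hΔ : s - s⁻¹ ≠ 0 := sub_inv_ne_zero_aux hs hs2
  refine ⟨?_, ?_, ?_, ?_⟩
  · apply Set.Subset.antisymm
    · exact fiber_subset_aux s r hs hr hs2 hr2
    · refine Set.union_subset (Set.union_subset ?_ ?_) ?_
      · exact orbit_subset_fiber_aux s r hs hr _ (up_conj_aux s hs)
          (by simp [upSL', diagSL, Matrix.mul_fin_two, Matrix.trace_fin_two])
      · exact orbit_subset_fiber_aux s r hs hr _ (low_conj_aux s hs)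
          (by simp [lowSL', diagSL, Matrix.mul_fin_two, Matrix.trace_fin_two])
      · exact orbit_subset_fiber_aux s r hs hr _ (diag'_conj_aux s hs)
          (by simp [diagSL', diagSL, Matrix.mul_fin_two, Matrix.trace_fin_two])
  · apply disjoint_orbits_aux r hr hr2
    intro E h01 h10 hEq
    have hdetE : (E : Matrix (Fin 2) (Fin 2) K) 0 0 * (E : Matrix (Fin 2) (Fin 2) K) 1 1 = 1 := by
      have := E.2
      rw [Matrix.det_fin_two, h01, h10] at this
      linear_combination this
    have hE00 : (E : Matrix (Fin 2) (Fin 2) K) 0 0 ≠ 0 := left_ne_zero_of_mul_eq_one hdetE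
    have hm : (E : Matrix (Fin 2) (Fin 2) K) * (upSL' s hs : Matrix (Fin 2) (Fin 2) K)
        = (lowSL' s hs : Matrix (Fin 2) (Fin 2) K) * E := by
      rw [← Matrix.SpecialLinearGroup.coe_mul, ← Matrix.SpecialLinearGroup.coe_mul, hEq]
    have h := congrFun (congrFun hm 0) 1
    simp [upSL', lowSL', Matrix.mul_apply, Fin.sum_univ_two, h01] at h
    rcases h with h | h
    · exact hE00 h
    · exact hΔ h
  · apply disjoint_orbits_aux r hr hr2
    intro E h01 h10 hEq
    have hdetE : (E : Matrix (Fin 2) (Fin 2) K) 0 0 * (E : Matrix (Fin 2) (Fin 2) K) 1 1 = 1 := by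
      have := E.2
      rw [Matrix.det_fin_two, h01, h10] at this
      linear_combination this
    have hE00 : (E : Matrix (Fin 2) (Fin 2) K) 0 0 ≠ 0 := left_ne_zero_of_mul_eq_one hdetE
    have hm : (E : Matrix (Fin 2) (Fin 2) K) * (upSL' s hs : Matrix (Fin 2) (Fin 2) K)
        = (diagSL' s hs : Matrix (Fin 2) (Fin 2) K) * E := by
      rw [← Matrix.SpecialLinearGroup.coe_mul, ← Matrix.SpecialLinearGroup.coe_mul, hEq]
    have h := congrFun (congrFun hm 0) 1
    simp [upSL', diagSL', Matrix.mul_apply, Fin.sum_univ_two, h01] at h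
    rcases h with h | h
    · exact hE00 h
    · exact hΔ h
  · apply disjoint_orbits_aux r hr hr2
    intro E h01 h10 hEq
    have hdetE : (E : Matrix (Fin 2) (Fin 2) K) 0 0 * (E : Matrix (Fin 2) (Fin 2) K) 1 1 = 1 := by
      have := E.2
      rw [Matrix.det_fin_two, h01, h10] at this
      linear_combination this
    have hE11 : (E : Matrix (Fin 2) (Fin 2) K) 1 1 ≠ 0 := right_ne_zero_of_mul_eq_one hdetE
    have hm : (E : Matrix (Fin 2) (Fin 2) K) * (lowSL' s hs : Matrix (Fin 2) (Fin 2) K)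
        = (diagSL' s hs : Matrix (Fin 2) (Fin 2) K) * E := by
      rw [← Matrix.SpecialLinearGroup.coe_mul, ← Matrix.SpecialLinearGroup.coe_mul, hEq]
    have h := congrFun (congrFun hm 1) 0
    simp [lowSL', diagSL', Matrix.mul_apply, Fin.sum_univ_two, h10] at h
    rcases h with h | h
    · exact hE11 h
    · exact hΔ h
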